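/- For any measurable X ⊆ [0,1]^d with positive volume, there exists a point c ∈ [0,1]^d that is a 1/2-centerpoint of X, i.e., vol(X ∩ H_v(c)) ≥ (1/2)·vol(X) for every nonzero v ∈ R^d. -/

import Mathlib

open MeasureTheory

/-- The ℓ∞-halfspace around `c` in direction `v`. -/
def Hsp {d : ℕ} (v c : Fin d → ℝ) : Set (Fin d → ℝ) :=
  {y | ∀ δ : ℝ, 0 < δ → ‖y - c‖ ≤ ‖y - (c - δ • v)‖}

namespace CenterpointAux

variable {d : ℕ}

lemma sub_sub_smul (y c v : Fin d → ℝ) (δ : ℝ) : y - (c - δ • v) = y - c + δ • v := by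
  abel

lemma mem_Hsp_iff {v c y : Fin d → ℝ} :
    y ∈ Hsp v c ↔ ∀ δ : ℝ, 0 < δ → ‖y - c‖ ≤ ‖y - c + δ • v‖ := by
  simp only [Hsp, Set.mem_setOf_eq, sub_sub_smul]

lemma isClosed_Hsp (v c : Fin d → ℝ) : IsClosed (Hsp v c) := by
  have : Hsp v c = ⋂ δ ∈ Set.Ioi (0:ℝ), {y : Fin d → ℝ | ‖y - c‖ ≤ ‖y - (c - δ • v)‖} := by
    ext y; simp [Hsp, Set.mem_iInter]
  rw [this]
  exact isClosed_biInter fun δ _ => isClosed_le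
    ((continuous_id.sub continuous_const).norm) ((continuous_id.sub continuous_const).norm)

lemma abs_le_norm (w : Fin d → ℝ) (i : Fin d) : |w i| ≤ ‖w‖ := by
  simpa [Real.norm_eq_abs] using norm_le_pi_norm w i

lemma norm_le_of_forall {w : Fin d → ℝ} {M : ℝ} (hM : 0 ≤ M) (h : ∀ i, |w i| ≤ M) :
    ‖w‖ ≤ M := by
  refine pi_norm_le_iff_of_nonneg hM |>.2 fun i => ?_
  simpa [Real.norm_eq_abs] using h i

lemma decay_mono {v' w : Fin d → ℝ} {t δ : ℝ} (ht : 0 ≤ t) (htδ : t ≤ δ)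
    (hδ : 0 < δ) (h : ‖w + δ • v'‖ ≤ ‖w‖ - δ) : ‖w + t • v'‖ ≤ ‖w‖ - t := by
  have hδ0 : δ ≠ 0 := ne_of_gt hδ
  have hl0 : 0 ≤ t / δ := div_nonneg ht hδ.le
  have hl1 : t / δ ≤ 1 := (div_le_one hδ).2 htδ
  have key : w + t • v' = (1 - t / δ) • w + (t / δ) • (w + δ • v') := by
    rw [smul_add, smul_smul, div_mul_cancel₀ _ hδ0]
    module
  calc ‖w + t • v'‖ = ‖(1 - t / δ) • w + (t / δ) • (w + δ • v')‖ := by rw [key]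
    _ ≤ ‖(1 - t / δ) • w‖ + ‖(t / δ) • (w + δ • v')‖ := norm_add_le _ _
    _ = (1 - t / δ) * ‖w‖ + (t / δ) * ‖w + δ • v'‖ := by
        rw [norm_smul, norm_smul, Real.norm_eq_abs, Real.norm_eq_abs,
          abs_of_nonneg (by linarith), abs_of_nonneg hl0]
    _ ≤ (1 - t / δ) * ‖w‖ + (t / δ) * (‖w‖ - δ) := by
        have := mul_le_mul_of_nonneg_left h hl0; linarith
    _ = ‖w‖ - (t / δ) * δ := by ring
    _ = ‖w‖ - t := by rw [div_mul_cancel₀ _ hδ0]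

lemma decay {c v v' : Fin d → ℝ} (h1 : ∀ i, |v' i| = 1)
    (hsign : ∀ i, v i ≠ 0 → 0 < v i * v' i) {y : Fin d → ℝ} (hy : y ∉ Hsp v c) :
    ∃ δ : ℝ, 0 < δ ∧ ‖y - c + δ • v'‖ ≤ ‖y - c‖ - δ := by
  rw [mem_Hsp_iff] at hy
  push_neg at hy
  obtain ⟨δ, hδ, hlt⟩ := hy
  set w := y - c with hw
  set M := ‖w‖ with hM
  have hM0 : 0 < M := lt_of_le_of_lt (norm_nonneg _) hlt
  have hne : Nonempty (Fin d) := by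
    by_contra h
    simp only [not_nonempty_iff] at h
    have hw0 : w = 0 := funext fun i => absurd (Nonempty.intro i) (by simpa using h)
    rw [hM, hw0, norm_zero] at hM0; exact lt_irrefl 0 hM0
  have hopp : ∀ k, |w k| = M → w k * v' k < 0 := by
    intro k hk
    have h2 : |w k + δ * v k| ≤ ‖w + δ • v‖ := by
      simpa using abs_le_norm (w + δ • v) k
    have h3 : |w k + δ * v k| < |w k| := by rw [hk]; exact lt_of_le_of_lt h2 hlt
    have h4 : |w k + δ * v k| * |w k + δ * v k| < |w k| * |w k| :=
      mul_self_lt_mul_self (abs_nonneg _) h3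
    rw [abs_mul_abs_self, abs_mul_abs_self] at h4
    have hwv : w k * v k < 0 := by nlinarith [sq_nonneg (δ * v k)]
    have hvk : v k ≠ 0 := by intro h0; rw [h0, mul_zero] at hwv; exact lt_irrefl 0 hwv
    have h5 := hsign k hvk
    nlinarith [mul_self_pos.2 hvk]
  have hwle : ∀ k, |w k| ≤ M := fun k => abs_le_norm w k
  set g : Fin d → ℝ := fun k => if |w k| = M then M else (M - |w k|) / 2 with hg
  set δ' := Finset.univ.inf' Finset.univ_nonempty g with hδ'
  have hgpos : ∀ k, 0 < g k := by
    intro k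
    by_cases h : |w k| = M
    · simp only [hg, h, if_true]; exact hM0
    · simp only [hg, h, if_false]
      have : |w k| < M := lt_of_le_of_ne (hwle k) h
      linarith
  have hδ'pos : 0 < δ' := by
    rw [hδ', Finset.lt_inf'_iff]
    exact fun k _ => hgpos k
  have hδ'le : ∀ k, δ' ≤ g k := fun k => Finset.inf'_le _ (Finset.mem_univ k)
  have hδ'M : δ' ≤ M := by
    obtain ⟨k, _, hk⟩ := Finset.exists_max_image Finset.univ (fun k => |w k|)
      ⟨Classical.arbitrary (Fin d), Finset.mem_univ _⟩
    have hkM : |w k| = M := le_antisymm (hwle k)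
      (norm_le_of_forall (abs_nonneg _) fun j => hk j (Finset.mem_univ j))
    simpa [g, hkM] using hδ'le k
  refine ⟨δ', hδ'pos, ?_⟩
  refine norm_le_of_forall (by linarith) fun k => ?_
  have hcoord : (w + δ' • v') k = w k + δ' * v' k := by simp
  rw [hcoord]
  by_cases h : |w k| = M
  · have hv'k : v' k = 1 ∨ v' k = -1 := by
      rcases abs_eq (by norm_num : (0:ℝ) ≤ 1) |>.1 (h1 k) with h' | h'
      · exact Or.inl h'
      · exact Or.inr h'
    have hop := hopp k h
    rcases hv'k with h' | h'
    · have hwk : w k = -M := by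
        rw [h'] at hop
        rcases abs_eq hM0.le |>.1 h with h'' | h''
        · exfalso; rw [h''] at hop; nlinarith
        · exact h''
      rw [hwk, h']
      rw [abs_le]; constructor <;> linarith
    · have hwk : w k = M := by
        rw [h'] at hop
        rcases abs_eq hM0.le |>.1 h with h'' | h''
        · exact h''
        · exfalso; rw [h''] at hop; nlinarith
      rw [hwk, h']
      rw [abs_le]; constructor <;> linarith
  · have hgk : δ' ≤ (M - |w k|) / 2 := by
      simpa [g, h] using hδ'le k
    calc |w k + δ' * v' k| ≤ |w k| + |δ' * v' k| := abs_add_le _ _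
      _ = |w k| + δ' := by rw [abs_mul, h1 k, abs_of_nonneg hδ'pos.le, mul_one]
      _ ≤ M - δ' := by linarith

lemma Hsp_subset {c v v' : Fin d → ℝ} (h1 : ∀ i, |v' i| = 1)
    (hsign : ∀ i, v i ≠ 0 → 0 < v i * v' i) : Hsp v' c ⊆ Hsp v c := by
  intro y hy
  by_contra hnot
  obtain ⟨δ, hδ, hdec⟩ := decay h1 hsign hnot
  have := mem_Hsp_iff.1 hy δ hδ
  linarith

/-- coordinatewise clamp to `[0,1]`. -/
def clamp (z : Fin d → ℝ) : Fin d → ℝ := fun i => max 0 (min 1 (z i))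

lemma clamp_mem (z : Fin d → ℝ) : clamp z ∈ Set.Icc (0 : Fin d → ℝ) 1 := by
  constructor <;> intro i
  · exact le_max_left _ _
  · exact max_le (by norm_num) (min_le_left _ _)

lemma norm_sub_clamp_le {y : Fin d → ℝ} (hy : y ∈ Set.Icc 0 1) (z : Fin d → ℝ) :
    ‖y - clamp z‖ ≤ ‖y - z‖ := by
  refine norm_le_of_forall (norm_nonneg _) fun i => ?_
  have h0 : (0:ℝ) ≤ y i := hy.1 i
  have h1 : y i ≤ 1 := hy.2 i
  have hpt : |y i - clamp z i| ≤ |y i - z i| := by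
    rcases le_total (z i) 0 with hz | hz
    · have hc : clamp z i = 0 := by
        simp only [clamp]
        rw [min_eq_right (hz.trans (by norm_num)), max_eq_left hz]
      rw [hc, sub_zero, abs_of_nonneg h0, abs_of_nonneg (by linarith)]
      linarith
    · rcases le_total (z i) 1 with hz1 | hz1
      · have hc : clamp z i = z i := by
          simp only [clamp]
          rw [min_eq_right hz1, max_eq_right hz]
        rw [hc]
      · have hc : clamp z i = 1 := by
          simp only [clamp]
          rw [min_eq_left hz1, max_eq_right (by norm_num : (0:ℝ) ≤ 1)]
        rw [hc, abs_of_nonpos (by linarith), abs_of_nonpos (by linarith)]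
        linarith
  calc |y i - clamp z i| ≤ |y i - z i| := hpt
    _ = |(y - z) i| := by simp
    _ ≤ ‖y - z‖ := abs_le_norm _ _

section Integral

variable {X : Set (Fin d → ℝ)} (hXmeas : MeasurableSet X) (hXsub : X ⊆ Set.Icc 0 1)

lemma X_finite (hXsub : X ⊆ Set.Icc 0 1) : volume X ≠ ⊤ := by
  have h1 : volume (Set.Icc (0 : Fin d → ℝ) 1) < ⊤ := isCompact_Icc.measure_lt_top
  exact ((measure_mono hXsub).trans_lt h1).ne

include hXmeas hXsub in
lemma intf (c : Fin d → ℝ) : IntegrableOn (fun y => ‖y - c‖) X volume := by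
  refine Measure.integrableOn_of_bounded (X_finite hXsub)
    ((continuous_id.sub continuous_const).norm.aestronglyMeasurable) (M := 1 + ‖c‖) ?_
  rw [ae_restrict_iff' hXmeas]
  refine ae_of_all _ fun y hy => ?_
  have hy1 : ‖y‖ ≤ 1 := by
    refine norm_le_of_forall zero_le_one fun i => ?_
    rw [abs_le]
    have h01 := hXsub hy
    rw [Set.mem_Icc] at h01
    have ha := h01.1 i
    have hb := h01.2 i
    simp only [Pi.zero_apply, Pi.one_apply] at ha hb
    exact ⟨by linarith, hb⟩
  calc ‖‖y - c‖‖ = ‖y - c‖ := norm_norm _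
    _ ≤ ‖y‖ + ‖c‖ := norm_sub_le _ _
    _ ≤ 1 + ‖c‖ := by linarith

include hXmeas hXsub in
lemma F_mono_aux (c₁ c₂ : Fin d → ℝ) :
    (∫ y in X, ‖y - c₁‖) ≤ (∫ y in X, ‖y - c₂‖) + ‖c₂ - c₁‖ * (volume X).toReal := by
  have h1 : (∫ y in X, (‖y - c₂‖ + ‖c₂ - c₁‖))
      = (∫ y in X, ‖y - c₂‖) + ‖c₂ - c₁‖ * (volume X).toReal := by
    rw [integral_add (intf hXmeas hXsub c₂) (integrableOn_const (X_finite hXsub))]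
    rw [setIntegral_const, smul_eq_mul, measureReal_def]
    ring
  rw [← h1]
  refine setIntegral_mono_on (intf hXmeas hXsub c₁)
    ((intf hXmeas hXsub c₂).add (integrableOn_const (X_finite hXsub)))
    hXmeas fun y _ => ?_
  calc ‖y - c₁‖ = ‖(y - c₂) + (c₂ - c₁)‖ := by rw [sub_add_sub_cancel]
    _ ≤ ‖y - c₂‖ + ‖c₂ - c₁‖ := norm_add_le _ _

include hXmeas hXsub in
lemma F_continuous : Continuous (fun c : Fin d → ℝ => ∫ y in X, ‖y - c‖) := by
  refine (LipschitzWith.of_dist_le_mul (K := (volume X).toNNReal) ?_).continuous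
  intro c₁ c₂
  have h1 := F_mono_aux hXmeas hXsub c₁ c₂
  have h2 := F_mono_aux hXmeas hXsub c₂ c₁
  rw [Real.dist_eq, dist_eq_norm]
  have hK : ((volume X).toNNReal : ℝ) = (volume X).toReal := rfl
  rw [hK, abs_le]
  have hnr : ‖c₂ - c₁‖ = ‖c₁ - c₂‖ := norm_sub_rev _ _
  constructor <;> nlinarith [norm_nonneg (c₁ - c₂), ENNReal.toReal_nonneg (a := volume X)]

end Integral

end CenterpointAux

open CenterpointAux

theorem centerpoint_exists {d : ℕ} (X : Set (Fin d → ℝ))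
    (hXmeas : MeasurableSet X) (hXsub : X ⊆ Set.Icc 0 1) (hXpos : 0 < volume X) :
    ∃ c ∈ Set.Icc (0 : Fin d → ℝ) 1,
      ∀ v : Fin d → ℝ, v ≠ 0 → volume X / 2 ≤ volume (X ∩ Hsp v c) := by
  classical
  have hXfin : volume X ≠ ⊤ := X_finite hXsub
  set F : (Fin d → ℝ) → ℝ := fun c => ∫ y in X, ‖y - c‖ with hF
  obtain ⟨c, hcmem, hcmin⟩ := isCompact_Icc.exists_isMinOn
    (Set.nonempty_Icc.2 zero_le_one) ((F_continuous hXmeas hXsub).continuousOn)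
  have hglobal : ∀ z, F c ≤ F z := by
    intro z
    have h1 : F c ≤ F (clamp z) := hcmin (clamp_mem z)
    have h2 : F (clamp z) ≤ F z := by
      refine setIntegral_mono_on (intf hXmeas hXsub (clamp z)) (intf hXmeas hXsub z)
        hXmeas fun y hy => norm_sub_clamp_le (hXsub hy) z
    exact h1.trans h2
  refine ⟨c, hcmem, fun v hv => ?_⟩
  -- the sign vector
  set v' : Fin d → ℝ := fun i => if 0 ≤ v i then 1 else -1 with hv'
  have h1 : ∀ i, |v' i| = 1 := by
    intro i; by_cases h : 0 ≤ v i <;> simp [v', h]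
  have hsign : ∀ i, v i ≠ 0 → 0 < v i * v' i := by
    intro i hvi
    by_cases h : 0 ≤ v i
    · simp only [v', if_pos h, mul_one]
      exact lt_of_le_of_ne h (Ne.symm hvi)
    · simp only [v', if_neg h, mul_neg_one]
      push_neg at h
      linarith
  have hsub : Hsp v' c ⊆ Hsp v c := Hsp_subset h1 hsign
  have hsignself : ∀ i, v' i ≠ 0 → 0 < v' i * v' i := fun i hi => mul_self_pos.2 hi
  -- the approximating bad sets
  set t : ℕ → ℝ := fun n => 1 / (n + 1) with htdef
  have ht_pos : ∀ n, 0 < t n := by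
    intro n
    have : (0:ℝ) < n + 1 := by positivity
    exact one_div_pos.2 this
  set B : ℕ → Set (Fin d → ℝ) :=
    fun n => X ∩ {y | ‖y - c + t n • v'‖ ≤ ‖y - c‖ - t n} with hBdef
  have hBmeas : ∀ n, MeasurableSet (B n) := by
    intro n
    refine hXmeas.inter ?_
    refine (isClosed_le ?_ ?_).measurableSet
    · exact ((continuous_id.sub continuous_const).add continuous_const).norm
    · exact ((continuous_id.sub continuous_const).norm).sub continuous_const
  have hBmono : Monotone B := by
    intro m n hmn y hy
    refine ⟨hy.1, ?_⟩
    have htle : t n ≤ t m := by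
      apply one_div_le_one_div_of_le
      · positivity
      · have : (m:ℝ) ≤ n := Nat.cast_le.2 hmn
        linarith
    exact decay_mono (ht_pos n).le htle (ht_pos m) hy.2
  have hBsub : ∀ n, B n ⊆ X \ Hsp v' c := by
    intro n y hy
    refine ⟨hy.1, fun hmem => ?_⟩
    have hle := mem_Hsp_iff.1 hmem (t n) (ht_pos n)
    have h2 := hy.2
    simp only [Set.mem_setOf_eq] at h2
    have := ht_pos n
    linarith
  have hBunion : X \ Hsp v' c = ⋃ n, B n := by
    apply Set.Subset.antisymm
    · intro y hy
      obtain ⟨δ, hδpos, hδdec⟩ := decay h1 hsignself hy.2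
      obtain ⟨n, hn⟩ := exists_nat_one_div_lt hδpos
      have htn : t n ≤ δ := le_of_lt hn
      exact Set.mem_iUnion.2 ⟨n, hy.1, decay_mono (ht_pos n).le htn hδpos hδdec⟩
    · exact Set.iUnion_subset hBsub
  -- key integral estimate
  have key : ∀ n, 2 * volume (B n) ≤ volume X := by
    intro n
    have hBfin : volume (B n) ≠ ⊤ :=
      ((measure_mono Set.inter_subset_left).trans_lt hXfin.lt_top).ne
    have hBXfin : volume (X \ B n) ≠ ⊤ :=
      ((measure_mono Set.diff_subset).trans_lt hXfin.lt_top).ne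
    set s := t n with hsdef
    have hs : 0 < s := ht_pos n
    set h : (Fin d → ℝ) → ℝ := fun y => ‖y - (c - s • v')‖ - ‖y - c‖ with hhdef
    have hint : IntegrableOn h X volume :=
      (intf hXmeas hXsub (c - s • v')).sub (intf hXmeas hXsub c)
    have hFh : 0 ≤ ∫ y in X, h y := by
      have := hglobal (c - s • v')
      rw [hF] at this
      rw [hhdef]
      rw [integral_sub (intf hXmeas hXsub (c - s • v')) (intf hXmeas hXsub c)]
      linarith
    have hsplit : (∫ y in X, h y) = (∫ y in X \ B n, h y) + ∫ y in B n, h y := by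
      have := integral_diff (hBmeas n) hint (fun y hy => hy.1)
      linarith
    have hIB : (∫ y in B n, h y) ≤ (volume (B n)).toReal * (-s) := by
      have := setIntegral_const (μ := volume) (s := B n) (-s)
      rw [smul_eq_mul, measureReal_def] at this
      rw [← this]
      refine setIntegral_mono_on (hint.mono_set (fun y hy => hy.1))
        (integrableOn_const hBfin) (hBmeas n) fun y hy => ?_
      have h2 := hy.2
      simp only [Set.mem_setOf_eq] at h2
      rw [hhdef]
      simp only
      rw [sub_sub_smul]
      linarith
    have hIXB : (∫ y in X \ B n, h y) ≤ (volume (X \ B n)).toReal * s := by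
      have := setIntegral_const (μ := volume) (s := X \ B n) s
      rw [smul_eq_mul, measureReal_def] at this
      rw [← this]
      refine setIntegral_mono_on (hint.mono_set Set.diff_subset)
        (integrableOn_const hBXfin) (hXmeas.diff (hBmeas n)) fun y _ => ?_
      rw [hhdef]
      simp only
      rw [sub_sub_smul]
      have hb : ‖y - c + s • v'‖ - ‖y - c‖ ≤ ‖s • v'‖ := by
        have := norm_sub_norm_le (y - c + s • v') (y - c)
        simpa using this
      have hv'le : ‖v'‖ ≤ 1 := norm_le_of_forall zero_le_one fun i => (h1 i).le
      have : ‖s • v'‖ ≤ s := by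
        rw [norm_smul, Real.norm_eq_abs, abs_of_nonneg hs.le]
        nlinarith
      linarith
    have hadd : (volume (B n)).toReal + (volume (X \ B n)).toReal = (volume X).toReal := by
      rw [← ENNReal.toReal_add hBfin hBXfin]
      congr 1
      rw [measure_add_diff (hBmeas n).nullMeasurableSet X, Set.union_eq_right.2 (fun y hy => hy.1)]
    have hreal : 2 * (volume (B n)).toReal ≤ (volume X).toReal := by nlinarith
    have h2fin : 2 * volume (B n) ≠ ⊤ := by
      exact ENNReal.mul_ne_top (by norm_num) hBfin
    rw [← ENNReal.toReal_le_toReal h2fin hXfin]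
    rw [ENNReal.toReal_mul]
    simpa using hreal
  -- conclude
  have hBle : volume (X \ Hsp v' c) ≤ volume X / 2 := by
    rw [hBunion, hBmono.directed_le.measure_iUnion]
    refine iSup_le fun n => ?_
    rw [ENNReal.le_div_iff_mul_le (Or.inl two_ne_zero) (Or.inl ENNReal.ofNat_ne_top), mul_comm]
    exact key n
  have hv'half : volume X / 2 ≤ volume (X ∩ Hsp v' c) := by
    have hsplit : volume (X ∩ Hsp v' c) + volume (X \ Hsp v' c) = volume X :=
      measure_inter_add_diff X (isClosed_Hsp v' c).measurableSet
    have hhalf : volume X / 2 + volume X / 2 = volume X := ENNReal.add_halves _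
    have hchain : volume X / 2 + volume X / 2 ≤ volume (X ∩ Hsp v' c) + volume X / 2 := by
      calc volume X / 2 + volume X / 2 = volume X := hhalf
        _ = volume (X ∩ Hsp v' c) + volume (X \ Hsp v' c) := hsplit.symm
        _ ≤ volume (X ∩ Hsp v' c) + volume X / 2 := add_le_add_right hBle _
    exact ENNReal.le_of_add_le_add_right (ENNReal.div_lt_top hXfin (by norm_num)).ne hchain
  exact hv'half.trans (measure_mono (Set.inter_subset_inter_right X hsub))
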